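/- Let (C, v) ⊆ (L, v) ⊆ (M, v) be extensions of valued fields. Suppose (e_1, …, e_m) is a tuple of elements of L that is C-linearly independent and separated over C, and (f_1, …, f_n) is a tuple of elements of M that is L-linearly independent and separated over L. Then the family of all products (e_j f_i)_{1 ≤ j ≤ m, 1 ≤ i ≤ n} is C-linearly independent and separated over C; that is, for all c_{i,j} ∈ C, v(∑_{i,j} c_{i,j} e_j f_i) = min_{i,j} (v(c_{i,j}) + v(e_j) + v(f_i)). -/

import Mathlib

/-!
STATEMENT 2: If (e_1,…,e_m) in L is C-linearly independent and separated over C,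
and (f_1,…,f_n) in M is L-linearly independent and separated over L, then the family
of products (e_j f_i) is C-linearly independent and separated over C:
for all c_{i,j} ∈ C, v(∑ c_{i,j} e_j f_i) = min_{i,j} (v c_{i,j} + v e_j + v f_i)
(multiplicatively, a `sup`).

C ⊆ L ⊆ M are realized as subfields `C ≤ L` of the ambient valued field `M`.
-/

variable {M Γ : Type*} [Field M] [LinearOrderedCommGroupWithZero Γ]

instance : OrderBot Γ where
  bot := 0
  bot_le := fun _ => zero_le'

/-- The tuple `b` is separated over the subfield `C`. -/
def Valuation.IsSeparatedTuple (v : Valuation M Γ) (C : Subfield M) {n : ℕ} (b : Fin n → M) :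
    Prop :=
  ∀ c : Fin n → C, v (∑ i, (c i : M) * b i) = Finset.univ.sup fun i => v (c i : M) * v (b i)

lemma sup_mul_right' {ι : Type*} (s : Finset ι) (g : ι → Γ) (b : Γ) :
    s.sup g * b = s.sup fun i => g i * b := by
  refine Finset.comp_sup_eq_sup_comp (· * b) (fun x y => ?_) (zero_mul b)
  exact Monotone.map_max (fun a a' h => mul_le_mul_left h b)

theorem product_of_separated_tuples_is_separated
    (v : Valuation M Γ) (C L : Subfield M) (hCL : C ≤ L) {m n : ℕ}
    (e : Fin m → M) (heL : ∀ j, e j ∈ L)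
    (f : Fin n → M)
    (heInd : LinearIndependent C e) (heSep : v.IsSeparatedTuple C e)
    (hfInd : LinearIndependent L f) (hfSep : v.IsSeparatedTuple L f) :
    LinearIndependent C (fun p : Fin m × Fin n => e p.1 * f p.2) ∧
      ∀ c : Fin m × Fin n → C,
        v (∑ p : Fin m × Fin n, (c p : M) * (e p.1 * f p.2)) =
          Finset.univ.sup fun p : Fin m × Fin n =>
            v (c p : M) * v (e p.1) * v (f p.2) := by
  have key : ∀ c : Fin m × Fin n → C,
      v (∑ p : Fin m × Fin n, (c p : M) * (e p.1 * f p.2)) =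
        Finset.univ.sup fun p : Fin m × Fin n =>
          v (c p : M) * v (e p.1) * v (f p.2) := by
    intro c
    have hsum : (∑ p : Fin m × Fin n, (c p : M) * (e p.1 * f p.2))
        = ∑ i : Fin n, (∑ j : Fin m, (c (j, i) : M) * e j) * f i := by
      rw [← Finset.univ_product_univ, Finset.sum_product_right]
      simp [Finset.sum_mul, mul_assoc]
    set g : Fin n → L := fun i => ⟨∑ j, (c (j, i) : M) * e j,
      Subfield.sum_mem _ fun j _ => L.mul_mem (hCL (c (j, i)).2) (heL j)⟩ with hg
    have h1 : v (∑ p : Fin m × Fin n, (c p : M) * (e p.1 * f p.2))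
        = Finset.univ.sup fun i => v (g i : M) * v (f i) := by
      rw [hsum]; exact hfSep g
    have h2 : ∀ i, v (g i : M) = Finset.univ.sup fun j => v ((c (j, i)) : M) * v (e j) :=
      fun i => heSep fun j => c (j, i)
    rw [h1, ← Finset.univ_product_univ, Finset.sup_product_right]
    refine Finset.sup_congr rfl fun i _ => ?_
    rw [h2 i, sup_mul_right']
  refine ⟨?_, key⟩
  have hene : ∀ j, v (e j) ≠ 0 := fun j =>
    v.ne_zero_iff.mpr (heInd.ne_zero j)
  have hfne : ∀ i, v (f i) ≠ 0 := fun i =>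
    v.ne_zero_iff.mpr (hfInd.ne_zero i)
  rw [Fintype.linearIndependent_iff]
  intro c hc p
  have hc' : (∑ q : Fin m × Fin n, (c q : M) * (e q.1 * f q.2)) = 0 := by
    rw [← hc]
    refine Finset.sum_congr rfl fun q _ => ?_
    rfl
  have h0 : (Finset.univ.sup fun q : Fin m × Fin n =>
      v (c q : M) * v (e q.1) * v (f q.2)) = 0 := by
    rw [← key c, hc', map_zero]
  have hle := Finset.le_sup (f := fun q : Fin m × Fin n =>
    v (c q : M) * v (e q.1) * v (f q.2)) (Finset.mem_univ p)
  rw [h0] at hle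
  have : v (c p : M) * v (e p.1) * v (f p.2) = 0 := le_antisymm hle zero_le'
  have hvc : v (c p : M) = 0 := by
    rcases mul_eq_zero.mp this with h | h
    · rcases mul_eq_zero.mp h with h' | h'
      · exact h'
      · exact absurd h' (hene p.1)
    · exact absurd h (hfne p.2)
  have : (c p : M) = 0 := v.zero_iff.mp hvc
  exact_mod_cast this
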